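/- Let B be a bialgebra over a field k, let n be a finite index type, and let ρ : B → Matrix n n k be a k-linear map with ρ(1) = 1 and ρ(ab) = ρ(b)·ρ(a) for all a, b ∈ B (a right matrix representation), and R an n × n matrix with entries in B satisfying Δ(Rⁱₖ) = Σ_m Rⁱₘ ⊗ Rᵐₖ and ε(Rⁱₖ) = δⁱₖ. Assume the right-right Yetter–Drinfeld condition: for all a ∈ B and all i, k, Σ_m a₍₁₎ · Rᵏₘ · ρᵐᵢ(a₍₂₎) = Σ_m Rᵐᵢ · a₍₂₎ · ρᵏₘ(a₍₁₎). Let V = kⁿ with standard basis (e_i), and define the k-linear operator c on V ⊗ V by c(e_i ⊗ e_k) := Σ_{m,j} ρʲᵢ(Rᵐₖ) · e_m ⊗ e_j. Then c satisfies the braid (quantum Yang–Baxter) equation on V ⊗ V ⊗ V: (c ⊗ id) ∘ (id ⊗ c) ∘ (c ⊗ id) = (id ⊗ c) ∘ (c ⊗ id) ∘ (id ⊗ c). -/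

import Mathlib

open TensorProduct

set_option maxHeartbeats 1000000 in
set_option synthInstance.maxHeartbeats 400000 in
/-- Let `B` be a bialgebra over a field `k`, `ρ : B → Matrix n n k` a
`k`-linear map with `ρ(1) = 1` and `ρ(ab) = ρ(b)ρ(a)`, and `R` a matrix over `B` with
`Δ(Rⁱₖ) = Σ_m Rⁱₘ ⊗ Rᵐₖ`, `ε(Rⁱₖ) = δⁱₖ`, satisfying the right-right Yetter–Drinfeld
condition `Σ_m a₍₁₎ Rᵏₘ ρᵐᵢ(a₍₂₎) = Σ_m Rᵐᵢ a₍₂₎ ρᵏₘ(a₍₁₎)`. Then the operator `c` on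
`kⁿ ⊗ kⁿ` defined by `c(e_i ⊗ e_k) = Σ_{m,j} ρʲᵢ(Rᵐₖ) e_m ⊗ e_j` satisfies the braid
(quantum Yang–Baxter) equation. -/
theorem stmt11 {k B : Type*} [Field k] [Ring B] [Bialgebra k B]
    {n : Type*} [Fintype n] [DecidableEq n]
    (rho : B →ₗ[k] Matrix n n k) (hrho1 : rho 1 = 1)
    (hrhom : ∀ a b : B, rho (a * b) = rho b * rho a)
    (R : Matrix n n B)
    (hΔR : ∀ i j, Coalgebra.comul (R := k) (R i j) = ∑ m, R i m ⊗ₜ[k] R m j)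
    (hεR : ∀ i j, Coalgebra.counit (R := k) (R i j) = if i = j then (1 : k) else 0)
    (hYD : ∀ (a : B) (ι : Type) (s : Finset ι) (a1 a2 : ι → B),
      Coalgebra.comul (R := k) a = ∑ u ∈ s, a1 u ⊗ₜ[k] a2 u →
      ∀ i j, ∑ u ∈ s, ∑ m, rho (a2 u) m i • (a1 u * R j m) =
             ∑ u ∈ s, ∑ m, rho (a1 u) j m • (R m i * a2 u))
    (c : (n → k) ⊗[k] (n → k) →ₗ[k] (n → k) ⊗[k] (n → k))
    (hc : c = ((Pi.basisFun k n).tensorProduct (Pi.basisFun k n)).constr k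
      fun p => ∑ m, ∑ j, rho (R m p.2) j p.1 • (Pi.basisFun k n m ⊗ₜ[k] Pi.basisFun k n j)) :
    LinearMap.rTensor (n → k) c ∘ₗ
      ((TensorProduct.assoc k (n → k) (n → k) (n → k)).symm.toLinearMap ∘ₗ
        LinearMap.lTensor (n → k) c ∘ₗ
        (TensorProduct.assoc k (n → k) (n → k) (n → k)).toLinearMap) ∘ₗ
      LinearMap.rTensor (n → k) c =
    ((TensorProduct.assoc k (n → k) (n → k) (n → k)).symm.toLinearMap ∘ₗ
        LinearMap.lTensor (n → k) c ∘ₗ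
        (TensorProduct.assoc k (n → k) (n → k) (n → k)).toLinearMap) ∘ₗ
      LinearMap.rTensor (n → k) c ∘ₗ
      ((TensorProduct.assoc k (n → k) (n → k) (n → k)).symm.toLinearMap ∘ₗ
        LinearMap.lTensor (n → k) c ∘ₗ
        (TensorProduct.assoc k (n → k) (n → k) (n → k)).toLinearMap) := by
  classical
  set e := Pi.basisFun k n with he
  have hcb : ∀ i j : n, c (e i ⊗ₜ[k] e j) =
      ∑ m, ∑ r, rho (R m j) r i • (e m ⊗ₜ[k] e r) := by
    intro i j
    have h1 := Module.Basis.constr_basis ((Pi.basisFun k n).tensorProduct (Pi.basisFun k n))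
      (S := k) (fun p : n × n => ∑ m, ∑ r, rho (R m p.2) r p.1 •
        (Pi.basisFun k n m ⊗ₜ[k] Pi.basisFun k n r)) (i, j)
    rw [hc, ← Module.Basis.tensorProduct_apply]
    exact h1
  apply ((e.tensorProduct e).tensorProduct e).ext
  rintro ⟨⟨i, k0⟩, l⟩
  simp only [Module.Basis.tensorProduct_apply', LinearMap.comp_apply, LinearEquiv.coe_coe,
    LinearMap.rTensor_tmul, LinearMap.lTensor_tmul, TensorProduct.assoc_tmul,
    TensorProduct.assoc_symm_tmul, hcb, map_sum, map_smul, sum_tmul, tmul_sum,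
    smul_tmul, tmul_smul, smul_smul, Finset.smul_sum]
  apply ((e.tensorProduct e).tensorProduct e).repr.injective
  ext x0
  obtain ⟨⟨a, b⟩, c0⟩ := x0
  simp only [map_sum, map_smul, Finsupp.finset_sum_apply, Finsupp.smul_apply,
    Module.Basis.tensorProduct_repr_tmul_apply, Module.Basis.repr_self, Finsupp.single_apply,
    smul_eq_mul, mul_ite, ite_mul, mul_one, mul_zero, zero_mul, one_mul,
    Finset.sum_ite_eq', Finset.mem_univ, if_true]
  simp only [Finset.sum_ite_irrel, Finset.sum_ite_eq', Finset.mem_univ, if_true,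
    Finset.sum_const_zero]
  have eqv := (Fintype.equivFin n).symm
  have key := hYD (R a l) (Fin (Fintype.card n)) Finset.univ
      (fun p => R a (eqv p)) (fun p => R (eqv p) l)
      (by rw [hΔR a l, ← Equiv.sum_comp eqv (fun m => R a m ⊗ₜ[k] R m l)]) k0 b
  rw [Equiv.sum_comp eqv (fun p => ∑ m, rho (R p l) m k0 • (R a p * R b m)),
    Equiv.sum_comp eqv (fun p => ∑ m, rho (R a p) b m • (R m k0 * R p l))] at key
  have key' := congrArg (fun x : B => rho x c0 i) key
  simp only [map_sum, Matrix.sum_apply, map_smul, Matrix.smul_apply, smul_eq_mul,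
    hrhom, Matrix.mul_apply, Finset.mul_sum] at key'
  have cyc : ∀ f : n → n → n → k,
      (∑ x, ∑ y, ∑ z, f x y z) = ∑ z, ∑ x, ∑ y, f x y z := by
    intro f
    calc (∑ x, ∑ y, ∑ z, f x y z) = ∑ x, ∑ z, ∑ y, f x y z :=
          Finset.sum_congr rfl fun x _ => Finset.sum_comm
      _ = ∑ z, ∑ x, ∑ y, f x y z := Finset.sum_comm
  rw [cyc]
  refine Eq.trans (Eq.trans ?_ key'.symm) ?_
  · exact Finset.sum_congr rfl fun _ _ => Finset.sum_congr rfl fun _ _ =>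
      Finset.sum_congr rfl fun _ _ => by ring
  · exact Finset.sum_congr rfl fun _ _ => Finset.sum_congr rfl fun _ _ =>
      Finset.sum_congr rfl fun _ _ => by ring
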